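/- Suppose E : ℝᴺ → ℝ is convex and continuous and ρᵏ_j > 0 for all j. Then the discrete regularized JKO problem — minimize F(ρ, m) over all pairs (ρ, m) with ρ_j > 0 for all j satisfying the discrete continuity constraint with data ρᵏ — admits a minimizer, and this minimizer is unique; in particular the minimizing density ρ* satisfies min_j ρ*_j > 0. -/

import Mathlib

/-- The discrete continuity constraint with data `ρᵏ` and zero-flux boundary values:
`m_0 = m_N = 0` and `ρ_j − ρᵏ_j + (m_j − m_{j−1})/Δx = 0` for `1 ≤ j ≤ N`
(densities are indexed by `Fin N`, fluxes by `Fin (N+1)`). -/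
def JKOFeasible (N : ℕ) (Δx : ℝ) (ρk : Fin N → ℝ)
    (p : (Fin N → ℝ) × (Fin (N + 1) → ℝ)) : Prop :=
  (∀ j, 0 < p.1 j) ∧ p.2 0 = 0 ∧ p.2 (Fin.last N) = 0 ∧
    ∀ j : Fin N, p.1 j - ρk j + (p.2 j.succ - p.2 j.castSucc) / Δx = 0

/-- The discrete regularized JKO objective
`F(ρ, m) = Σ_{j=1}^{N−1} [2 m_j²/(ρ_j + ρ_{j+1})
  + (β⁻²τ²/Δx²)(log ρ_{j+1} − log ρ_j)²(ρ_j + ρ_{j+1})/2] Δx + 2τ E(ρ)`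
(with the paper's index `j` corresponding to the Lean density index `i = j − 1`,
so that the interior flux `m_j` is the entry of `m : Fin (N+1) → ℝ` at `i + 1`). -/
noncomputable def JKOObjective (N : ℕ) (Δx τ β : ℝ) (E : (Fin N → ℝ) → ℝ)
    (p : (Fin N → ℝ) × (Fin (N + 1) → ℝ)) : ℝ :=
  (∑ i : Fin N, if h : (i : ℕ) + 1 < N then
      2 * (p.2 ⟨(i : ℕ) + 1, by omega⟩) ^ 2 / (p.1 i + p.1 ⟨(i : ℕ) + 1, h⟩) +
        β⁻¹ ^ 2 * τ ^ 2 / Δx ^ 2 *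
          (Real.log (p.1 ⟨(i : ℕ) + 1, h⟩) - Real.log (p.1 i)) ^ 2 *
          (p.1 i + p.1 ⟨(i : ℕ) + 1, h⟩) / 2
    else 0) * Δx + 2 * τ * E p.1


open Real Set


noncomputable def jkoPsi (t : ℝ) : ℝ := (1 + t) * (Real.log t) ^ 2

lemma jkoPsi_hasDeriv1 {t : ℝ} (ht : 0 < t) :
    HasDerivAt jkoPsi ((Real.log t) ^ 2 + (1 + t) * (2 * Real.log t / t)) t := by
  have h1 : HasDerivAt (fun t : ℝ => 1 + t) 1 t := (hasDerivAt_id t).const_add 1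
  have hl : HasDerivAt Real.log t⁻¹ t := Real.hasDerivAt_log (ne_of_gt ht)
  have h2 : HasDerivAt (fun t : ℝ => (Real.log t) ^ 2) (2 * Real.log t ^ 1 * t⁻¹) t := by
    simpa using (hl.fun_pow 2)
  have := h1.fun_mul h2
  refine this.congr_deriv ?_
  ring

noncomputable def jkoPsi' (t : ℝ) : ℝ := (Real.log t) ^ 2 + 2 * Real.log t + 2 * Real.log t / t

lemma jkoPsi'_eq {t : ℝ} (ht : 0 < t) :
    (Real.log t) ^ 2 + (1 + t) * (2 * Real.log t / t) = jkoPsi' t := by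
  unfold jkoPsi'
  field_simp
  ring

lemma jkoPsi'_hasDeriv {t : ℝ} (ht : 0 < t) :
    HasDerivAt jkoPsi' (2 * Real.log t / t + 2 / t + (2 / t - 2 * Real.log t / t) / t) t := by
  have hl : HasDerivAt Real.log t⁻¹ t := Real.hasDerivAt_log (ne_of_gt ht)
  have h1 : HasDerivAt (fun t : ℝ => (Real.log t) ^ 2) (2 * Real.log t ^ 1 * t⁻¹) t := by
    simpa using hl.fun_pow 2
  have h2 : HasDerivAt (fun t : ℝ => 2 * Real.log t) (2 * t⁻¹) t := hl.const_mul 2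
  have h3 : HasDerivAt (fun t : ℝ => 2 * Real.log t / t)
      ((2 * t⁻¹ * t - 2 * Real.log t * 1) / t ^ 2) t := h2.div (hasDerivAt_id t) (ne_of_gt ht)
  have := (h1.fun_add h2).fun_add h3
  refine this.congr_deriv ?_
  field_simp

lemma jkoPsi_strictConvexOn : StrictConvexOn ℝ (Ioi (0:ℝ)) jkoPsi := by
  have hderiv : ∀ t ∈ Ioi (0:ℝ), deriv jkoPsi t = jkoPsi' t := by
    intro t ht
    rw [(jkoPsi_hasDeriv1 ht).deriv]
    exact jkoPsi'_eq ht
  apply strictConvexOn_of_deriv2_pos (convex_Ioi 0)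
  · intro t ht
    exact (jkoPsi_hasDeriv1 ht).continuousAt.continuousWithinAt
  · intro t ht
    rw [interior_Ioi] at ht
    have ht0 : (0:ℝ) < t := ht
    have ht' : t ≠ 0 := ne_of_gt ht0
    have hde : deriv (deriv jkoPsi) t = 2 * Real.log t / t + 2 / t + (2 / t - 2 * Real.log t / t) / t := by
      have hev : deriv jkoPsi =ᶠ[nhds t] jkoPsi' := by
        filter_upwards [Ioi_mem_nhds ht] with s hs using hderiv s hs
      rw [Filter.EventuallyEq.deriv_eq hev]
      exact (jkoPsi'_hasDeriv ht).deriv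
    simp only [Function.iterate_succ, Function.iterate_zero, Function.comp_apply, id_eq]
    rw [hde]
    have key : 2 * Real.log t / t + 2 / t + (2 / t - 2 * Real.log t / t) / t
        = 2 * ((t - 1) * Real.log t + t + 1) / t ^ 2 := by
      rw [eq_div_iff (by positivity)]

      field_simp
      ring
    rw [key]
    have h1 : 0 ≤ (t - 1) * Real.log t := by
      rcases le_or_gt 1 t with h | h
      · exact mul_nonneg (by linarith) (Real.log_nonneg h)
      · have hl := Real.log_nonpos (le_of_lt ht) (le_of_lt h)
        nlinarith
    apply div_pos
    · nlinarith [ht0]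
    · positivity


/-- kinetic midpoint inequality -/
lemma jko_kin_ineq {m m' s s' : ℝ} (hs : 0 < s) (hs' : 0 < s') :
    2 * ((m + m') / 2) ^ 2 / ((s + s') / 2) ≤ (2 * m ^ 2 / s + 2 * m' ^ 2 / s') / 2 := by
  rw [div_le_div_iff₀ (by positivity) (by norm_num)]
  rw [div_add_div _ _ (ne_of_gt hs) (ne_of_gt hs'), div_mul_eq_mul_div, le_div_iff₀ (by positivity)]
  nlinarith [sq_nonneg (m * s' - m' * s), sq_nonneg (m + m'), mul_pos hs hs']

/-- P(a,b) = (log b - log a)^2 (a+b) as perspective of psi -/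
lemma jko_P_persp {a b : ℝ} (ha : 0 < a) (hb : 0 < b) :
    (Real.log b - Real.log a) ^ 2 * (a + b) = a * jkoPsi (b / a) := by
  unfold jkoPsi
  rw [Real.log_div (ne_of_gt hb) (ne_of_gt ha)]
  field_simp

lemma jko_reg_ineq {a b a' b' : ℝ} (ha : 0 < a) (hb : 0 < b) (ha' : 0 < a') (hb' : 0 < b') :
    (Real.log (b + b') - Real.log (a + a')) ^ 2 * ((a + a') + (b + b'))
      ≤ (Real.log b - Real.log a) ^ 2 * (a + b)
        + (Real.log b' - Real.log a') ^ 2 * (a' + b') := by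
  rw [jko_P_persp ha hb, jko_P_persp ha' hb', jko_P_persp (by linarith) (by linarith)]
  set lam : ℝ := a / (a + a') with hlam
  have hsum : (0:ℝ) < a + a' := by linarith
  have hmix : (b + b') / (a + a') = lam * (b / a) + (1 - lam) * (b' / a') := by
    rw [hlam]
    field_simp
    ring
  rcases eq_or_ne (b / a) (b' / a') with hq | hq
  · rw [hmix, hq]
    have : lam * (b' / a') + (1 - lam) * (b' / a') = b' / a' := by ring
    rw [this]
    have : a * jkoPsi (b' / a') + a' * jkoPsi (b' / a') = (a + a') * jkoPsi (b' / a') := by ring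
    rw [this]
  · have hlam0 : 0 < lam := by positivity
    have hlam1 : lam < 1 := by
      rw [hlam, div_lt_one hsum]; linarith
    have hstrict : jkoPsi (lam * (b / a) + (1 - lam) * (b' / a'))
        < lam * jkoPsi (b / a) + (1 - lam) * jkoPsi (b' / a') := by
      have h := jkoPsi_strictConvexOn.2 (mem_Ioi.2 (div_pos hb ha))
        (mem_Ioi.2 (div_pos hb' ha')) hq hlam0 (sub_pos.2 hlam1) (by ring)
      simpa using h
    rw [hmix]
    calc (a + a') * jkoPsi (lam * (b / a) + (1 - lam) * (b' / a'))
        ≤ (a + a') * (lam * jkoPsi (b / a) + (1 - lam) * jkoPsi (b' / a')) := by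
          exact mul_le_mul_of_nonneg_left (le_of_lt hstrict) (le_of_lt hsum)
      _ = a * jkoPsi (b / a) + a' * jkoPsi (b' / a') := by
          rw [hlam]
          field_simp
          ring

lemma jko_reg_ineq_strict {a b a' b' : ℝ} (ha : 0 < a) (hb : 0 < b) (ha' : 0 < a') (hb' : 0 < b')
    (hne : b * a' ≠ b' * a) :
    (Real.log (b + b') - Real.log (a + a')) ^ 2 * ((a + a') + (b + b'))
      < (Real.log b - Real.log a) ^ 2 * (a + b)
        + (Real.log b' - Real.log a') ^ 2 * (a' + b') := by
  rw [jko_P_persp ha hb, jko_P_persp ha' hb', jko_P_persp (by linarith) (by linarith)]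
  set lam : ℝ := a / (a + a') with hlam
  have hsum : (0:ℝ) < a + a' := by linarith
  have hmix : (b + b') / (a + a') = lam * (b / a) + (1 - lam) * (b' / a') := by
    rw [hlam]
    field_simp
    ring
  have hq : b / a ≠ b' / a' := by
    intro h
    apply hne
    field_simp at h
    nlinarith [h]
  have hlam0 : 0 < lam := by positivity
  have hlam1 : lam < 1 := by
    rw [hlam, div_lt_one hsum]; linarith
  have hstrict : jkoPsi (lam * (b / a) + (1 - lam) * (b' / a'))
      < lam * jkoPsi (b / a) + (1 - lam) * jkoPsi (b' / a') := by
    have h := jkoPsi_strictConvexOn.2 (mem_Ioi.2 (div_pos hb ha))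
      (mem_Ioi.2 (div_pos hb' ha')) hq hlam0 (sub_pos.2 hlam1) (by ring)
    simpa using h
  rw [hmix]
  calc (a + a') * jkoPsi (lam * (b / a) + (1 - lam) * (b' / a'))
      < (a + a') * (lam * jkoPsi (b / a) + (1 - lam) * jkoPsi (b' / a')) := by
        exact mul_lt_mul_of_pos_left hstrict hsum
    _ = a * jkoPsi (b / a) + a' * jkoPsi (b' / a') := by
        rw [hlam]
        field_simp
        ring

noncomputable def jkoF (T v : ℝ) : ℝ := v * Real.exp (-Real.sqrt (2 * T / v))

lemma jkoF_pos {T v : ℝ} (hv : 0 < v) : 0 < jkoF T v :=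
  mul_pos hv (Real.exp_pos _)

lemma jkoF_le_self {T v : ℝ} (hv : 0 ≤ v) : jkoF T v ≤ v := by
  have : Real.exp (-Real.sqrt (2 * T / v)) ≤ 1 := by
    rw [Real.exp_le_one_iff]
    simp [Real.sqrt_nonneg]
  calc jkoF T v ≤ v * 1 := mul_le_mul_of_nonneg_left this hv
    _ = v := mul_one v

lemma jkoF_mono {T u v : ℝ} (hT : 0 ≤ T) (hu : 0 < u) (huv : u ≤ v) : jkoF T u ≤ jkoF T v := by
  unfold jkoF
  apply mul_le_mul huv _ (le_of_lt (Real.exp_pos _)) (by linarith)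
  rw [Real.exp_le_exp]
  apply neg_le_neg
  apply Real.sqrt_le_sqrt
  apply div_le_div_of_nonneg_left (by linarith) hu huv

lemma jkoF_iter_pos {T v : ℝ} (hv : 0 < v) (d : ℕ) : 0 < (jkoF T)^[d] v := by
  induction d with
  | zero => simpa
  | succ d ih => rw [Function.iterate_succ_apply']; exact jkoF_pos ih

lemma jkoF_iter_le_self {T v : ℝ} (hv : 0 < v) (d : ℕ) : (jkoF T)^[d] v ≤ v := by
  induction d with
  | zero => simp
  | succ d ih =>
      rw [Function.iterate_succ_apply']
      exact le_trans (jkoF_le_self (le_of_lt (jkoF_iter_pos hv d))) ih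

lemma jkoF_iter_anti {T v : ℝ} (hT : 0 ≤ T) (hv : 0 < v) {d e : ℕ} (hde : d ≤ e) :
    (jkoF T)^[e] v ≤ (jkoF T)^[d] v := by
  obtain ⟨k, rfl⟩ := Nat.exists_eq_add_of_le hde
  rw [Nat.add_comm, Function.iterate_add_apply]
  exact jkoF_iter_le_self (jkoF_iter_pos hv d) k

/-- the key step lemma: a bounded regularization term forces a lower bound -/
lemma jkoF_step {T a b : ℝ} (ha : 0 < a) (hb : 0 < b)
    (h : (Real.log b - Real.log a) ^ 2 * (a + b) / 2 ≤ T) : jkoF T a ≤ b := by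
  have hT : 0 ≤ T := le_trans (by positivity) h
  rcases le_or_gt (Real.log a - Real.log b) 0 with hc | hc
  · have hab : a ≤ b := by
      have := Real.log_le_log_iff ha hb |>.1 (by linarith)
      exact this
    exact le_trans (jkoF_le_self (le_of_lt ha)) hab
  · have h1 : (Real.log a - Real.log b) ^ 2 * a ≤ 2 * T := by
      nlinarith [sq_nonneg (Real.log b - Real.log a)]
    have h2 : (Real.log a - Real.log b) ^ 2 ≤ 2 * T / a := by
      rw [le_div_iff₀ ha]; linarith
    have h3 : Real.log a - Real.log b ≤ Real.sqrt (2 * T / a) := by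
      rw [show (Real.log a - Real.log b) = Real.sqrt ((Real.log a - Real.log b)^2) by
        rw [Real.sqrt_sq (le_of_lt hc)]]
      exact Real.sqrt_le_sqrt h2
    have h4 : Real.log (jkoF T a) ≤ Real.log b := by
      unfold jkoF
      rw [Real.log_mul (ne_of_gt ha) (Real.exp_ne_zero _), Real.log_exp]
      linarith
    calc jkoF T a = Real.exp (Real.log (jkoF T a)) := (Real.exp_log (jkoF_pos ha)).symm
      _ ≤ Real.exp (Real.log b) := Real.exp_le_exp.2 h4
      _ = b := Real.exp_log hb


def jkoFlux (N : ℕ) (Δx : ℝ) (ρk ρ : Fin N → ℝ) : Fin (N + 1) → ℝ :=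
  fun j => Δx * ∑ i ∈ Finset.univ.filter (fun i : Fin N => (i : ℕ) < (j : ℕ)), (ρk i - ρ i)

lemma jkoFlux_zero (N : ℕ) (Δx : ℝ) (ρk ρ : Fin N → ℝ) : jkoFlux N Δx ρk ρ 0 = 0 := by
  unfold jkoFlux
  have : Finset.univ.filter (fun i : Fin N => (i : ℕ) < ((0 : Fin (N+1)) : ℕ)) = ∅ := by
    apply Finset.filter_false_of_mem
    intro i _
    simp
  rw [this]
  simp

lemma jkoFlux_succ (N : ℕ) (Δx : ℝ) (ρk ρ : Fin N → ℝ) (j : Fin N) :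
    jkoFlux N Δx ρk ρ j.succ = jkoFlux N Δx ρk ρ j.castSucc + Δx * (ρk j - ρ j) := by
  unfold jkoFlux
  have hins : Finset.univ.filter (fun i : Fin N => (i : ℕ) < ((j.succ : Fin (N+1)) : ℕ))
      = insert j (Finset.univ.filter (fun i : Fin N => (i : ℕ) < ((j.castSucc : Fin (N+1)) : ℕ))) := by
    ext i
    simp only [Finset.mem_filter, Finset.mem_insert, Finset.mem_univ, true_and,
      Fin.val_succ, Fin.coe_castSucc]
    constructor
    · intro h
      rcases Nat.lt_succ_iff_lt_or_eq.1 h with h | h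
      · exact Or.inr h
      · exact Or.inl (Fin.ext h)
    · rintro (rfl | h)
      · omega
      · omega
  rw [hins, Finset.sum_insert (by simp)]
  ring

lemma jkoFlux_last (N : ℕ) (Δx : ℝ) (ρk ρ : Fin N → ℝ) :
    jkoFlux N Δx ρk ρ (Fin.last N) = Δx * (∑ i, ρk i - ∑ i, ρ i) := by
  unfold jkoFlux
  have : Finset.univ.filter (fun i : Fin N => (i : ℕ) < ((Fin.last N : Fin (N+1)) : ℕ))
      = Finset.univ := by
    apply Finset.filter_true_of_mem
    intro i _
    simp [Fin.is_lt]
  rw [this, Finset.sum_sub_distrib]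

lemma jko_feasible_flux {N : ℕ} {Δx : ℝ} (hΔx : Δx ≠ 0) {ρk : Fin N → ℝ}
    {p : (Fin N → ℝ) × (Fin (N + 1) → ℝ)} (hp : JKOFeasible N Δx ρk p) :
    p.2 = jkoFlux N Δx ρk p.1 := by
  obtain ⟨hpos, h0, hlast, hcon⟩ := hp
  funext j
  induction j using Fin.induction with
  | zero => rw [h0, jkoFlux_zero]
  | succ i ih =>
      have hc := hcon i
      have : p.2 i.succ = p.2 i.castSucc + Δx * (ρk i - p.1 i) := by
        field_simp at hc
        linarith
      rw [this, ih, jkoFlux_succ]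

lemma jko_feasible_mass {N : ℕ} {Δx : ℝ} (hΔx : Δx ≠ 0) {ρk : Fin N → ℝ}
    {p : (Fin N → ℝ) × (Fin (N + 1) → ℝ)} (hp : JKOFeasible N Δx ρk p) :
    ∑ i, p.1 i = ∑ i, ρk i := by
  have h2 := jko_feasible_flux hΔx hp
  have hlast := hp.2.2.1
  rw [h2, jkoFlux_last] at hlast
  rcases mul_eq_zero.1 hlast with h | h
  · exact absurd h hΔx
  · linarith

lemma jko_flux_feasible {N : ℕ} {Δx : ℝ} (hΔx : Δx ≠ 0) {ρk ρ : Fin N → ℝ}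
    (hpos : ∀ j, 0 < ρ j) (hmass : ∑ i, ρ i = ∑ i, ρk i) :
    JKOFeasible N Δx ρk (ρ, jkoFlux N Δx ρk ρ) := by
  refine ⟨hpos, jkoFlux_zero N Δx ρk ρ, ?_, ?_⟩
  · show jkoFlux N Δx ρk ρ (Fin.last N) = 0
    rw [jkoFlux_last, hmass]
    ring
  · intro j
    show ρ j - ρk j + (jkoFlux N Δx ρk ρ j.succ - jkoFlux N Δx ρk ρ j.castSucc) / Δx = 0
    rw [jkoFlux_succ]
    field_simp
    ring

noncomputable def jkoTerm (N : ℕ) (Δx τ β : ℝ)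
    (p : (Fin N → ℝ) × (Fin (N + 1) → ℝ)) (i : Fin N) : ℝ :=
  if h : (i : ℕ) + 1 < N then
      2 * (p.2 ⟨(i : ℕ) + 1, by omega⟩) ^ 2 / (p.1 i + p.1 ⟨(i : ℕ) + 1, h⟩) +
        β⁻¹ ^ 2 * τ ^ 2 / Δx ^ 2 *
          (Real.log (p.1 ⟨(i : ℕ) + 1, h⟩) - Real.log (p.1 i)) ^ 2 *
          (p.1 i + p.1 ⟨(i : ℕ) + 1, h⟩) / 2
    else 0

lemma jkoObj_eq (N : ℕ) (Δx τ β : ℝ) (E : (Fin N → ℝ) → ℝ)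
    (p : (Fin N → ℝ) × (Fin (N + 1) → ℝ)) :
    JKOObjective N Δx τ β E p = (∑ i, jkoTerm N Δx τ β p i) * Δx + 2 * τ * E p.1 := rfl

lemma jkoTerm_nonneg {N : ℕ} {Δx τ β : ℝ} {p : (Fin N → ℝ) × (Fin (N + 1) → ℝ)}
    (hp : ∀ j, 0 < p.1 j) (i : Fin N) : 0 ≤ jkoTerm N Δx τ β p i := by
  unfold jkoTerm
  by_cases h : (i : ℕ) + 1 < N
  · rw [dif_pos h]
    have h1 := hp i
    have h2 := hp ⟨(i : ℕ) + 1, h⟩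
    have hs : 0 < p.1 i + p.1 ⟨(i : ℕ) + 1, h⟩ := by linarith
    apply add_nonneg
    · positivity
    · apply div_nonneg _ (by norm_num)
      apply mul_nonneg _ (le_of_lt hs)
      positivity
  · rw [dif_neg h]

lemma jkoTerm_mid {N : ℕ} {Δx τ β : ℝ} {p q : (Fin N → ℝ) × (Fin (N + 1) → ℝ)}
    (hp : ∀ j, 0 < p.1 j) (hq : ∀ j, 0 < q.1 j) (i : Fin N) :
    jkoTerm N Δx τ β (fun j => (p.1 j + q.1 j) / 2, fun j => (p.2 j + q.2 j) / 2) i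
      ≤ (jkoTerm N Δx τ β p i + jkoTerm N Δx τ β q i) / 2 := by
  unfold jkoTerm
  by_cases h : (i : ℕ) + 1 < N
  · simp only [dif_pos h]
    have ha := hp i; have hb := hp ⟨(i : ℕ) + 1, h⟩
    have ha' := hq i; have hb' := hq ⟨(i : ℕ) + 1, h⟩
    set a := p.1 i; set b := p.1 ⟨(i : ℕ) + 1, h⟩
    set a' := q.1 i; set b' := q.1 ⟨(i : ℕ) + 1, h⟩
    set m := p.2 ⟨(i : ℕ) + 1, by omega⟩; set m' := q.2 ⟨(i : ℕ) + 1, by omega⟩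
    set C := β⁻¹ ^ 2 * τ ^ 2 / Δx ^ 2 with hCdef
    have hC : 0 ≤ C := by positivity
    have hden : (a + a') / 2 + (b + b') / 2 = ((a + b) + (a' + b')) / 2 := by ring
    have hkin : 2 * ((m + m') / 2) ^ 2 / ((a + a') / 2 + (b + b') / 2)
        ≤ (2 * m ^ 2 / (a + b) + 2 * m' ^ 2 / (a' + b')) / 2 := by
      rw [hden]
      exact jko_kin_ineq (by linarith) (by linarith)
    have hlog : Real.log ((b + b') / 2) - Real.log ((a + a') / 2)
        = Real.log (b + b') - Real.log (a + a') := by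
      rw [Real.log_div (by linarith) two_ne_zero, Real.log_div (by linarith) two_ne_zero]
      ring
    have hreg : C * (Real.log ((b + b') / 2) - Real.log ((a + a') / 2)) ^ 2
          * ((a + a') / 2 + (b + b') / 2) / 2
        ≤ (C * (Real.log b - Real.log a) ^ 2 * (a + b) / 2
            + C * (Real.log b' - Real.log a') ^ 2 * (a' + b') / 2) / 2 := by
      rw [hlog]
      have h2 := jko_reg_ineq ha hb ha' hb'
      nlinarith [mul_le_mul_of_nonneg_left h2 hC]
    linarith
  · simp only [dif_neg h]
    norm_num

lemma jkoTerm_mid_strict {N : ℕ} {Δx τ β : ℝ} (hΔx : 0 < Δx) (hτ : 0 < τ) (hβ : 0 < β)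
    {p q : (Fin N → ℝ) × (Fin (N + 1) → ℝ)}
    (hp : ∀ j, 0 < p.1 j) (hq : ∀ j, 0 < q.1 j) (i : Fin N) (h : (i : ℕ) + 1 < N)
    (hne : p.1 ⟨(i : ℕ) + 1, h⟩ * q.1 i ≠ q.1 ⟨(i : ℕ) + 1, h⟩ * p.1 i) :
    jkoTerm N Δx τ β (fun j => (p.1 j + q.1 j) / 2, fun j => (p.2 j + q.2 j) / 2) i
      < (jkoTerm N Δx τ β p i + jkoTerm N Δx τ β q i) / 2 := by
  unfold jkoTerm
  simp only [dif_pos h]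
  have ha := hp i; have hb := hp ⟨(i : ℕ) + 1, h⟩
  have ha' := hq i; have hb' := hq ⟨(i : ℕ) + 1, h⟩
  set a := p.1 i; set b := p.1 ⟨(i : ℕ) + 1, h⟩
  set a' := q.1 i; set b' := q.1 ⟨(i : ℕ) + 1, h⟩
  set m := p.2 ⟨(i : ℕ) + 1, by omega⟩; set m' := q.2 ⟨(i : ℕ) + 1, by omega⟩
  set C := β⁻¹ ^ 2 * τ ^ 2 / Δx ^ 2 with hCdef
  have hC : 0 < C := by positivity
  have hden : (a + a') / 2 + (b + b') / 2 = ((a + b) + (a' + b')) / 2 := by ring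
  have hkin : 2 * ((m + m') / 2) ^ 2 / ((a + a') / 2 + (b + b') / 2)
      ≤ (2 * m ^ 2 / (a + b) + 2 * m' ^ 2 / (a' + b')) / 2 := by
    rw [hden]
    exact jko_kin_ineq (by linarith) (by linarith)
  have hlog : Real.log ((b + b') / 2) - Real.log ((a + a') / 2)
      = Real.log (b + b') - Real.log (a + a') := by
    rw [Real.log_div (by linarith) two_ne_zero, Real.log_div (by linarith) two_ne_zero]
    ring
  have hreg : C * (Real.log ((b + b') / 2) - Real.log ((a + a') / 2)) ^ 2
        * ((a + a') / 2 + (b + b') / 2) / 2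
      < (C * (Real.log b - Real.log a) ^ 2 * (a + b) / 2
          + C * (Real.log b' - Real.log a') ^ 2 * (a' + b') / 2) / 2 := by
    rw [hlog]
    have h2 := jko_reg_ineq_strict ha hb ha' hb' hne
    nlinarith [mul_lt_mul_of_pos_left h2 hC]
  linarith

set_option maxHeartbeats 1000000 in
/-- If the discrete energy `E` is convex and continuous and `ρᵏ_j > 0` for all `j`,
then the discrete regularized JKO problem admits a unique minimizer over all pairs
`(ρ, m)` with `ρ_j > 0` satisfying the discrete continuity constraint with data `ρᵏ`
(in particular the minimizing density is strictly positive, being feasible). -/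
theorem JKO_exists_unique_minimizer (N : ℕ) (hN : 1 ≤ N) (Δx τ β : ℝ)
    (hΔx : 0 < Δx) (hτ : 0 < τ) (hβ : 0 < β)
    (E : (Fin N → ℝ) → ℝ) (hE : ConvexOn ℝ Set.univ E) (hEcont : Continuous E)
    (ρk : Fin N → ℝ) (hρk : ∀ j, 0 < ρk j) :
    ∃! p : (Fin N → ℝ) × (Fin (N + 1) → ℝ),
      JKOFeasible N Δx ρk p ∧
        ∀ q, JKOFeasible N Δx ρk q →
          JKOObjective N Δx τ β E p ≤ JKOObjective N Δx τ β E q := by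
  classical
  have hN0 : (0:ℕ) < N := hN
  haveI : Nonempty (Fin N) := ⟨⟨0, hN0⟩⟩
  have hΔx' : Δx ≠ 0 := ne_of_gt hΔx
  have hMpos : 0 < ∑ i, ρk i := Finset.sum_pos (fun j _ => hρk j) Finset.univ_nonempty
  set M : ℝ := ∑ i, ρk i with hM
  have hCpos : 0 < β⁻¹ ^ 2 * τ ^ 2 / Δx ^ 2 := by positivity
  set C : ℝ := β⁻¹ ^ 2 * τ ^ 2 / Δx ^ 2 with hC
  -- E is bounded below on the box [0, M]^N
  have hboxcomp : IsCompact (Set.univ.pi fun _ : Fin N => Icc (0:ℝ) M) :=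
    isCompact_univ_pi fun _ => isCompact_Icc
  have hboxne : ((fun _ => 0 : Fin N → ℝ)) ∈ (Set.univ.pi fun _ : Fin N => Icc (0:ℝ) M) := by
    rw [Set.mem_univ_pi]; intro j; exact ⟨le_refl 0, le_of_lt hMpos⟩
  obtain ⟨x₀, hx₀mem, hx₀min⟩ := hboxcomp.exists_isMinOn ⟨_, hboxne⟩ hEcont.continuousOn
  set B : ℝ := -E x₀ with hB
  have hEB : ∀ ρ : Fin N → ℝ, (∀ j, 0 ≤ ρ j) → ∑ i, ρ i = M → -B ≤ E ρ := by
    intro ρ h1 h2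
    rw [hB, neg_neg]
    refine isMinOn_iff.mp hx₀min ρ ?_
    rw [Set.mem_univ_pi]
    intro j
    refine ⟨h1 j, ?_⟩
    calc ρ j ≤ ∑ i, ρ i := Finset.single_le_sum (fun i _ => h1 i) (Finset.mem_univ j)
      _ = M := h2
  -- the base feasible point
  set p₀ : (Fin N → ℝ) × (Fin (N+1) → ℝ) := (ρk, jkoFlux N Δx ρk ρk) with hp₀def
  have hp₀ : JKOFeasible N Δx ρk p₀ := jko_flux_feasible hΔx' hρk rfl
  set c₀ : ℝ := JKOObjective N Δx τ β E p₀ with hc₀def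
  have hc₀ : -(2 * τ * B) ≤ c₀ := by
    rw [hc₀def, jkoObj_eq]
    have h1 : 0 ≤ (∑ i, jkoTerm N Δx τ β p₀ i) * Δx :=
      mul_nonneg (Finset.sum_nonneg fun i _ => jkoTerm_nonneg hρk i) (le_of_lt hΔx)
    have h2 : -B ≤ E p₀.1 := hEB ρk (fun j => le_of_lt (hρk j)) rfl
    nlinarith [h2, hτ]
  set T : ℝ := (c₀ + 2 * τ * B + 1) / (C * Δx) with hT
  have hTpos : 0 < T := div_pos (by linarith) (by positivity)
  have hTnn : 0 ≤ T := le_of_lt hTpos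
  have hMN : 0 < M / N := div_pos hMpos (by exact_mod_cast hN0)
  set ε₀ : ℝ := (jkoF T)^[N-1] (M / N) with hε₀def
  have hε₀pos : 0 < ε₀ := jkoF_iter_pos hMN _
  -- coercivity: feasible points with a small density component have large objective
  have hlow : ∀ q, JKOFeasible N Δx ρk q → (∃ j, q.1 j < ε₀) →
      c₀ < JKOObjective N Δx τ β E q := by
    intro q hqF ⟨j₁, hj₁⟩
    have hqpos := hqF.1
    have hqmass : ∑ i, q.1 i = M := jko_feasible_mass hΔx' hqF
    by_cases hall : ∀ i : Fin N, ∀ h : (i : ℕ) + 1 < N,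
        (Real.log (q.1 ⟨(i:ℕ)+1, h⟩) - Real.log (q.1 i)) ^ 2 * (q.1 i + q.1 ⟨(i:ℕ)+1, h⟩) / 2 ≤ T
    · -- then all densities are bounded below by ε₀, contradiction
      exfalso
      obtain ⟨a, -, haM⟩ : ∃ a ∈ Finset.univ, M / N ≤ q.1 a := by
        by_contra hcon
        push_neg at hcon
        have hlt : ∑ i, q.1 i < ∑ _i : Fin N, M / N :=
          Finset.sum_lt_sum_of_nonempty Finset.univ_nonempty (fun i _ => hcon i (Finset.mem_univ i))
        rw [Finset.sum_const, Finset.card_univ, Fintype.card_fin, nsmul_eq_mul] at hlt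
        rw [hqmass, mul_div_cancel₀ _ (by exact_mod_cast hN0.ne' : (N:ℝ) ≠ 0)] at hlt
        exact lt_irrefl M hlt
      have key : ∀ d : ℕ, ∀ j : Fin N, ((j:ℕ) + d = (a:ℕ) ∨ (a:ℕ) + d = (j:ℕ)) →
          (jkoF T)^[d] (M / N) ≤ q.1 j := by
        intro d
        induction d with
        | zero =>
            intro j hj
            have : j = a := Fin.ext (by omega)
            rw [this]
            simpa using haM
        | succ d ih =>
            intro j hj
            rcases hj with hcase | hcase
            · have hj1 : (j:ℕ) + 1 < N := by omega
              set j' : Fin N := ⟨(j:ℕ)+1, hj1⟩ with hj'def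
              have hIH : (jkoF T)^[d] (M / N) ≤ q.1 j' := by
                apply ih j'
                left
                simp only [hj'def]
                omega
              have hraw := hall j hj1
              have hstep : jkoF T (q.1 j') ≤ q.1 j := by
                apply jkoF_step (hqpos j') (hqpos j)
                calc (Real.log (q.1 j) - Real.log (q.1 j')) ^ 2 * (q.1 j' + q.1 j) / 2
                    = (Real.log (q.1 ⟨(j:ℕ)+1, hj1⟩) - Real.log (q.1 j)) ^ 2
                        * (q.1 j + q.1 ⟨(j:ℕ)+1, hj1⟩) / 2 := by rw [← hj'def]; ring
                  _ ≤ T := hraw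
              rw [Function.iterate_succ_apply']
              exact le_trans (jkoF_mono hTnn (jkoF_iter_pos hMN d) hIH) hstep
            · have hj0 : 0 < (j:ℕ) := by omega
              have hj1 : ((j:ℕ) - 1) + 1 < N := by omega
              set j' : Fin N := ⟨(j:ℕ)-1, by omega⟩ with hj'def
              have hIH : (jkoF T)^[d] (M / N) ≤ q.1 j' := by
                apply ih j'
                right
                simp only [hj'def]
                omega
              have hraw := hall j' hj1
              have hjeq : (⟨((j':ℕ)) + 1, hj1⟩ : Fin N) = j := Fin.ext (by simp [hj'def]; omega)
              have hstep : jkoF T (q.1 j') ≤ q.1 j := by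
                apply jkoF_step (hqpos j') (hqpos j)
                calc (Real.log (q.1 j) - Real.log (q.1 j')) ^ 2 * (q.1 j' + q.1 j) / 2
                    = (Real.log (q.1 ⟨(j':ℕ)+1, hj1⟩) - Real.log (q.1 j')) ^ 2
                        * (q.1 j' + q.1 ⟨(j':ℕ)+1, hj1⟩) / 2 := by rw [hjeq]
                  _ ≤ T := hraw
              rw [Function.iterate_succ_apply']
              exact le_trans (jkoF_mono hTnn (jkoF_iter_pos hMN d) hIH) hstep
      -- conclude ε₀ ≤ q.1 j₁
      have hd : ∃ d : ℕ, d ≤ N - 1 ∧ (((j₁:ℕ) + d = (a:ℕ)) ∨ ((a:ℕ) + d = (j₁:ℕ))) := by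
        rcases le_total (j₁:ℕ) (a:ℕ) with hle | hle
        · exact ⟨(a:ℕ) - (j₁:ℕ), by omega, Or.inl (by omega)⟩
        · exact ⟨(j₁:ℕ) - (a:ℕ), by omega, Or.inr (by omega)⟩
      obtain ⟨d, hdle, hdor⟩ := hd
      have h1 : (jkoF T)^[d] (M / N) ≤ q.1 j₁ := key d j₁ hdor
      have h2 : ε₀ ≤ (jkoF T)^[d] (M / N) := jkoF_iter_anti hTnn hMN hdle
      linarith
    · push_neg at hall
      obtain ⟨i₀, h₀, hraw⟩ := hall
      have hterm : C * T < jkoTerm N Δx τ β q i₀ := by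
        unfold jkoTerm
        rw [dif_pos h₀]
        have hkin : 0 ≤ 2 * (q.2 ⟨(i₀:ℕ)+1, by omega⟩) ^ 2 / (q.1 i₀ + q.1 ⟨(i₀:ℕ)+1, h₀⟩) := by
          have := hqpos i₀; have := hqpos ⟨(i₀:ℕ)+1, h₀⟩
          positivity
        have hCT : C * T < C * ((Real.log (q.1 ⟨(i₀:ℕ)+1, h₀⟩) - Real.log (q.1 i₀)) ^ 2
            * (q.1 i₀ + q.1 ⟨(i₀:ℕ)+1, h₀⟩) / 2) := by
          exact mul_lt_mul_of_pos_left hraw hCpos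
        rw [hC] at hCT ⊢
        nlinarith [hkin, hCT]
      have hsum : jkoTerm N Δx τ β q i₀ ≤ ∑ i, jkoTerm N Δx τ β q i :=
        Finset.single_le_sum (fun i _ => jkoTerm_nonneg hqpos i) (Finset.mem_univ i₀)
      have hEq : -B ≤ E q.1 := hEB q.1 (fun j => le_of_lt (hqpos j)) hqmass
      rw [jkoObj_eq]
      have hTval : T * (C * Δx) = c₀ + 2 * τ * B + 1 := by
        rw [hT]
        field_simp
      have h3 : C * T * Δx < (∑ i, jkoTerm N Δx τ β q i) * Δx :=
        mul_lt_mul_of_pos_right (by linarith) hΔx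
      nlinarith [h3, hTval, mul_le_mul_of_nonneg_left hEq (by positivity : (0:ℝ) ≤ 2 * τ)]
  -- the compact set K
  have hεkpos : 0 < Finset.univ.inf' Finset.univ_nonempty ρk :=
    (Finset.lt_inf'_iff _).mpr (fun i _ => hρk i)
  set ε : ℝ := min ε₀ (Finset.univ.inf' Finset.univ_nonempty ρk) with hε
  have hεpos : 0 < ε := lt_min hε₀pos hεkpos
  set K : Set (Fin N → ℝ) := {ρ | (∀ j, ε ≤ ρ j) ∧ ∑ i, ρ i = M} with hK
  have hKsub : K ⊆ Set.univ.pi fun _ : Fin N => Icc ε M := by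
    intro ρ hρ
    rw [Set.mem_univ_pi]
    intro j
    refine ⟨hρ.1 j, ?_⟩
    calc ρ j ≤ ∑ i, ρ i :=
          Finset.single_le_sum (fun i _ => le_trans (le_of_lt hεpos) (hρ.1 i)) (Finset.mem_univ j)
      _ = M := hρ.2
  have hKclosed : IsClosed K := by
    have h1 : IsClosed {ρ : Fin N → ℝ | ∀ j, ε ≤ ρ j} := by
      have he : {ρ : Fin N → ℝ | ∀ j, ε ≤ ρ j} = ⋂ j, {ρ : Fin N → ℝ | ε ≤ ρ j} := by
        ext ρ
        simp
      rw [he]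
      exact isClosed_iInter fun j => isClosed_le continuous_const (continuous_apply j)
    have h2 : IsClosed {ρ : Fin N → ℝ | ∑ i, ρ i = M} :=
      isClosed_eq (continuous_finset_sum _ fun i _ => continuous_apply i) continuous_const
    have he2 : K = {ρ : Fin N → ℝ | ∀ j, ε ≤ ρ j} ∩ {ρ : Fin N → ℝ | ∑ i, ρ i = M} := by
      ext ρ
      simp [hK, Set.mem_setOf_eq, Set.mem_inter_iff]
    rw [he2]
    exact h1.inter h2
  have hKcomp : IsCompact K :=
    (isCompact_univ_pi fun _ : Fin N => isCompact_Icc).of_isClosed_subset hKclosed hKsub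
  have hρkK : ρk ∈ K :=
    ⟨fun j => le_trans (min_le_right _ _) (Finset.inf'_le _ (Finset.mem_univ j)), hM.symm⟩
  -- continuity of the reduced objective on K
  set G : (Fin N → ℝ) → ℝ := fun ρ => JKOObjective N Δx τ β E (ρ, jkoFlux N Δx ρk ρ) with hG
  have hGcont : ContinuousOn G K := by
    have hGeq : G = fun ρ =>
        (∑ i, jkoTerm N Δx τ β (ρ, jkoFlux N Δx ρk ρ) i) * Δx + 2 * τ * E ρ := by
      funext ρ
      exact jkoObj_eq N Δx τ β E (ρ, jkoFlux N Δx ρk ρ)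
    rw [hGeq]
    apply ContinuousOn.add
    · apply ContinuousOn.mul _ continuousOn_const
      apply continuousOn_finset_sum
      intro i _
      unfold jkoTerm
      by_cases h : (i : ℕ) + 1 < N
      · simp only [dif_pos h]
        have hden : ∀ ρ ∈ K, ρ i + ρ (⟨(i:ℕ)+1, h⟩ : Fin N) ≠ 0 := by
          intro ρ hρ
          have ha := hρ.1 i
          have hb := hρ.1 (⟨(i:ℕ)+1, h⟩ : Fin N)
          have : 0 < ρ i + ρ (⟨(i:ℕ)+1, h⟩ : Fin N) := by linarith [hεpos]
          exact ne_of_gt this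
        have hlogc : ∀ (k : Fin N), ContinuousOn (fun ρ : Fin N → ℝ => Real.log (ρ k)) K := by
          intro k
          apply ContinuousOn.log (continuous_apply k).continuousOn
          intro ρ hρ
          exact ne_of_gt (lt_of_lt_of_le hεpos (hρ.1 k))
        apply ContinuousOn.add
        · apply ContinuousOn.div
          · apply Continuous.continuousOn
            apply Continuous.mul continuous_const
            apply Continuous.pow
            unfold jkoFlux
            exact continuous_const.mul (continuous_finset_sum _ fun j _ =>
              continuous_const.sub (continuous_apply j))
          · exact ((continuous_apply i).continuousOn.add
              (continuous_apply (⟨(i:ℕ)+1, h⟩ : Fin N)).continuousOn)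
          · exact hden
        · apply ContinuousOn.div _ continuousOn_const (fun ρ _ => two_ne_zero)
          apply ContinuousOn.mul
          · exact ContinuousOn.mul continuousOn_const
              (((hlogc _).sub (hlogc _)).pow 2)
          · exact ((continuous_apply i).continuousOn.add
              (continuous_apply (⟨(i:ℕ)+1, h⟩ : Fin N)).continuousOn)
      · simp only [dif_neg h]
        exact continuousOn_const
    · exact (continuous_const.mul hEcont).continuousOn
  obtain ⟨ρs, hρsK, hρsmin⟩ := hKcomp.exists_isMinOn ⟨ρk, hρkK⟩ hGcont
  set ps : (Fin N → ℝ) × (Fin (N+1) → ℝ) := (ρs, jkoFlux N Δx ρk ρs) with hpsdef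
  have hρspos : ∀ j, 0 < ρs j := fun j => lt_of_lt_of_le hεpos (hρsK.1 j)
  have hpsF : JKOFeasible N Δx ρk ps := jko_flux_feasible hΔx' hρspos (hρsK.2.trans hM)
  have hminimal : ∀ q, JKOFeasible N Δx ρk q →
      JKOObjective N Δx τ β E ps ≤ JKOObjective N Δx τ β E q := by
    intro q hq
    have hq2 := jko_feasible_flux hΔx' hq
    have hqmass : ∑ i, q.1 i = M := (jko_feasible_mass hΔx' hq).trans hM.symm
    have hqeq : q = (q.1, jkoFlux N Δx ρk q.1) := by
      rw [← hq2]
    have hJq : JKOObjective N Δx τ β E q = G q.1 := by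
      conv_lhs => rw [hqeq]
    by_cases hKq : ∀ j, ε ≤ q.1 j
    · have hmem : q.1 ∈ K := ⟨hKq, hqmass⟩
      have hle := isMinOn_iff.mp hρsmin q.1 hmem
      calc JKOObjective N Δx τ β E ps = G ρs := rfl
        _ ≤ G q.1 := hle
        _ = JKOObjective N Δx τ β E q := hJq.symm
    · push_neg at hKq
      obtain ⟨j, hj⟩ := hKq
      have hjε₀ : q.1 j < ε₀ := lt_of_lt_of_le hj (min_le_left _ _)
      have h1 := hlow q hq ⟨j, hjε₀⟩
      have h2 : G ρs ≤ c₀ := isMinOn_iff.mp hρsmin ρk hρkK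
      calc JKOObjective N Δx τ β E ps = G ρs := rfl
        _ ≤ c₀ := h2
        _ ≤ JKOObjective N Δx τ β E q := le_of_lt h1
  refine ⟨ps, ⟨hpsF, hminimal⟩, ?_⟩
  rintro q ⟨hqF, hqmin⟩
  by_contra hne
  have hq2 := jko_feasible_flux hΔx' hqF
  have hp2 : ps.2 = jkoFlux N Δx ρk ps.1 := rfl
  have hρne : q.1 ≠ ps.1 := by
    intro h
    apply hne
    apply Prod.ext h
    rw [hq2, hp2, h]
  have hJeq : JKOObjective N Δx τ β E q = JKOObjective N Δx τ β E ps :=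
    le_antisymm (hqmin ps hpsF) (hminimal q hqF)
  have hqpos := hqF.1
  have hqmass : ∑ i, q.1 i = M := (jko_feasible_mass hΔx' hqF).trans hM.symm
  have hpsmass : ∑ i, ps.1 i = M := hρsK.2
  -- find an index where the densities are not proportional
  have hidx : ∃ i : Fin N, ∃ h : (i:ℕ)+1 < N,
      q.1 ⟨(i:ℕ)+1, h⟩ * ps.1 i ≠ ps.1 ⟨(i:ℕ)+1, h⟩ * q.1 i := by
    by_contra hcon
    push_neg at hcon
    apply hρne
    have hrat : ∀ k : ℕ, ∀ hk : k < N,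
        q.1 ⟨k, hk⟩ * ps.1 ⟨0, hN0⟩ = ps.1 ⟨k, hk⟩ * q.1 ⟨0, hN0⟩ := by
      intro k
      induction k with
      | zero =>
          intro hk
          ring
      | succ k ih =>
          intro hk
          have hk' : k < N := by omega
          have hIH := ih hk'
          have hcc := hcon ⟨k, hk'⟩ hk
          have hppos : ps.1 ⟨k, hk'⟩ ≠ 0 := ne_of_gt (hρspos _)
          apply mul_left_cancel₀ hppos
          calc ps.1 ⟨k,hk'⟩ * (q.1 ⟨k+1,hk⟩ * ps.1 ⟨0,hN0⟩)
              = (q.1 ⟨k+1,hk⟩ * ps.1 ⟨k,hk'⟩) * ps.1 ⟨0,hN0⟩ := by ring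
            _ = (ps.1 ⟨k+1,hk⟩ * q.1 ⟨k,hk'⟩) * ps.1 ⟨0,hN0⟩ := by rw [hcc]
            _ = ps.1 ⟨k+1,hk⟩ * (q.1 ⟨k,hk'⟩ * ps.1 ⟨0,hN0⟩) := by ring
            _ = ps.1 ⟨k+1,hk⟩ * (ps.1 ⟨k,hk'⟩ * q.1 ⟨0,hN0⟩) := by rw [hIH]
            _ = ps.1 ⟨k,hk'⟩ * (ps.1 ⟨k+1,hk⟩ * q.1 ⟨0,hN0⟩) := by ring
    funext j
    have hsum2 : (∑ i, q.1 i) * ps.1 ⟨0,hN0⟩ = (∑ i, ps.1 i) * q.1 ⟨0,hN0⟩ := by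
      rw [Finset.sum_mul, Finset.sum_mul]
      apply Finset.sum_congr rfl
      intro i _
      have := hrat i.1 i.isLt
      simpa using this
    rw [hqmass, hpsmass] at hsum2
    have h00 : ps.1 ⟨0,hN0⟩ = q.1 ⟨0,hN0⟩ := mul_left_cancel₀ (ne_of_gt hMpos) hsum2
    have hj := hrat j.1 j.isLt
    rw [h00] at hj
    have hcan := mul_right_cancel₀ (ne_of_gt (hqpos ⟨0,hN0⟩)) hj
    simpa using hcan
  obtain ⟨i₀, h₀, hi₀⟩ := hidx
  -- the midpoint is feasible and strictly better
  set r : (Fin N → ℝ) × (Fin (N+1) → ℝ) :=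
    (fun j => (q.1 j + ps.1 j) / 2, fun j => (q.2 j + ps.2 j) / 2) with hrdef
  have hrpos : ∀ j, 0 < r.1 j := by
    intro j
    have := hqpos j
    have := hρspos j
    show 0 < (q.1 j + ps.1 j) / 2
    positivity
  have hrF : JKOFeasible N Δx ρk r := by
    obtain ⟨-, hq0, hqlast, hqcon⟩ := hqF
    obtain ⟨-, hp0, hplast, hpcon⟩ := hpsF
    refine ⟨hrpos, ?_, ?_, ?_⟩
    · show (q.2 0 + ps.2 0) / 2 = 0
      rw [hq0, hp0]
      norm_num
    · show (q.2 (Fin.last N) + ps.2 (Fin.last N)) / 2 = 0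
      rw [hqlast, hplast]
      norm_num
    · intro j
      have h1 := hqcon j
      have h2 := hpcon j
      show (q.1 j + ps.1 j) / 2 - ρk j
          + ((q.2 j.succ + ps.2 j.succ) / 2 - (q.2 j.castSucc + ps.2 j.castSucc) / 2) / Δx = 0
      have havg : ((q.1 j - ρk j + (q.2 j.succ - q.2 j.castSucc) / Δx)
            + (ps.1 j - ρk j + (ps.2 j.succ - ps.2 j.castSucc) / Δx)) / 2 = 0 := by
        rw [h1, h2]
        norm_num
      calc (q.1 j + ps.1 j) / 2 - ρk j
            + ((q.2 j.succ + ps.2 j.succ) / 2 - (q.2 j.castSucc + ps.2 j.castSucc) / 2) / Δx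
          = ((q.1 j - ρk j + (q.2 j.succ - q.2 j.castSucc) / Δx)
            + (ps.1 j - ρk j + (ps.2 j.succ - ps.2 j.castSucc) / Δx)) / 2 := by ring
        _ = 0 := havg
  have hsumlt : ∑ i, jkoTerm N Δx τ β r i
      < (∑ i, jkoTerm N Δx τ β q i + ∑ i, jkoTerm N Δx τ β ps i) / 2 := by
    have hle : ∀ i ∈ Finset.univ, jkoTerm N Δx τ β r i
        ≤ (jkoTerm N Δx τ β q i + jkoTerm N Δx τ β ps i) / 2 :=
      fun i _ => jkoTerm_mid hqpos hρspos i
    have hlt : jkoTerm N Δx τ β r i₀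
        < (jkoTerm N Δx τ β q i₀ + jkoTerm N Δx τ β ps i₀) / 2 :=
      jkoTerm_mid_strict hΔx hτ hβ hqpos hρspos i₀ h₀ hi₀
    calc ∑ i, jkoTerm N Δx τ β r i
        < ∑ i, (jkoTerm N Δx τ β q i + jkoTerm N Δx τ β ps i) / 2 :=
          Finset.sum_lt_sum hle ⟨i₀, Finset.mem_univ i₀, hlt⟩
      _ = (∑ i, jkoTerm N Δx τ β q i + ∑ i, jkoTerm N Δx τ β ps i) / 2 := by
          rw [← Finset.sum_div, Finset.sum_add_distrib]
  have hEr : E r.1 ≤ (E q.1 + E ps.1) / 2 := by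
    have h2 := hE.2 (Set.mem_univ q.1) (Set.mem_univ ps.1)
      (by norm_num : (0:ℝ) ≤ 1/2) (by norm_num : (0:ℝ) ≤ 1/2) (by norm_num)
    have harg : (1/2 : ℝ) • q.1 + (1/2 : ℝ) • ps.1 = r.1 := by
      funext j
      show (1/2 : ℝ) * q.1 j + (1/2 : ℝ) * ps.1 j = (q.1 j + ps.1 j) / 2
      ring
    rw [harg] at h2
    rw [smul_eq_mul, smul_eq_mul] at h2
    linarith [h2]
  have hJr : JKOObjective N Δx τ β E r < JKOObjective N Δx τ β E ps := by
    have e1 := jkoObj_eq N Δx τ β E q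
    have e2 := jkoObj_eq N Δx τ β E ps
    have e3 := jkoObj_eq N Δx τ β E r
    have hA := mul_lt_mul_of_pos_right hsumlt hΔx
    have hB2 := mul_le_mul_of_nonneg_left hEr (by positivity : (0:ℝ) ≤ 2 * τ)
    nlinarith [hA, hB2, hJeq, e1, e2, e3]
  have hcontra := hminimal r hrF
  linarith
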